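/- Let K be a compact Hausdorff topological space, I a directed set, and ((X_i, d_i))_{i ∈ I} a directed system of complete metric spaces (distances allowed to take the value +∞) with nonexpansive connecting maps ι_{ji} : X_i → X_j for i ≤ j, and let (X, d) be a complete metric space with compatible nonexpansive maps ι_i : X_i → X presenting X as the filtered colimit, so that in particular d(ι_i(x), ι_i(y)) = inf_{j ≥ i} d_j(ι_{ji}(x), ι_{ji}(y)) for all i ∈ I and x, y ∈ X_i. Then for every i ∈ I and all continuous maps f, g : K → X_i one has sup_{p ∈ K} d(ι_i(f(p)), ι_i(g(p))) = inf_{j ≥ i} sup_{p ∈ K} d_j(ι_{ji}(f(p)), ι_{ji}(g(p))); that is, the canonical map from the colimit of the spaces of continuous maps Cont(K, X_i), each metrized by the supremum distance, to Cont(K, X) is an isometric embedding. -/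
import Mathlib


/-- For a compact Hausdorff space `K` and a filtered colimit
`(X, d) = colim (X i, d i)` of complete (extended-)metric spaces along
nonexpansive connecting maps, the canonical map from the colimit of the spaces
`Cont(K, X i)` (with supremum distance) to `Cont(K, X)` is an isometric
embedding: for continuous `f g : K → X i`,
`sup_p d(ι_i (f p), ι_i (g p)) = inf_{j ≥ i} sup_p d_j (ι_{ji} (f p), ι_{ji} (g p))`. -/
theorem stmt0
    {K : Type*} [TopologicalSpace K] [CompactSpace K] [T2Space K]
    {I : Type*} [Preorder I] [IsDirected I (· ≤ ·)] [Nonempty I]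
    {X : I → Type*} [∀ i, EMetricSpace (X i)] [∀ i, CompleteSpace (X i)]
    {Y : Type*} [EMetricSpace Y] [CompleteSpace Y]
    (ι : ∀ i j, i ≤ j → X i → X j)
    (ιc : ∀ i, X i → Y)
    (hι1 : ∀ i j (h : i ≤ j) (x y : X i), edist (ι i j h x) (ι i j h y) ≤ edist x y)
    (hιc1 : ∀ i (x y : X i), edist (ιc i x) (ιc i y) ≤ edist x y)
    (hcomp : ∀ i j (h : i ≤ j) (x : X i), ιc j (ι i j h x) = ιc i x)
    (htrans : ∀ i j k (hij : i ≤ j) (hjk : j ≤ k) (x : X i),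
      ι j k hjk (ι i j hij x) = ι i k (hij.trans hjk) x)
    (hid : ∀ i (x : X i), ι i i le_rfl x = x)
    (hdense : Dense (⋃ i, Set.range (ιc i)))
    (hdist : ∀ i (x y : X i),
      edist (ιc i x) (ιc i y) = ⨅ j : {j // i ≤ j}, edist (ι i j.1 j.2 x) (ι i j.1 j.2 y))
    (i : I) (f g : K → X i) (hf : Continuous f) (hg : Continuous g) :
    (⨆ p : K, edist (ιc i (f p)) (ιc i (g p)))
      = ⨅ j : {j // i ≤ j}, ⨆ p : K, edist (ι i j.1 j.2 (f p)) (ι i j.1 j.2 (g p)) := by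
  classical
  haveI hD : IsDirected {j // i ≤ j} (· ≤ ·) :=
    ⟨fun a b => by
      obtain ⟨c, hc1, hc2⟩ := directed_of (· ≤ ·) a.1 b.1
      exact ⟨⟨c, a.2.trans hc1⟩, hc1, hc2⟩⟩
  haveI : Nonempty {j // i ≤ j} := ⟨⟨i, le_rfl⟩⟩
  set F : {j // i ≤ j} → K → ENNReal :=
    fun j p => edist (ι i j.1 j.2 (f p)) (ι i j.1 j.2 (g p)) with hF
  have hmono : ∀ (a b : {j // i ≤ j}), a ≤ b → ∀ p, F b p ≤ F a p := by
    intro a b h p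
    have e1 : ι i b.1 b.2 (f p) = ι a.1 b.1 h (ι i a.1 a.2 (f p)) :=
      (htrans i a.1 b.1 a.2 h (f p)).symm
    have e2 : ι i b.1 b.2 (g p) = ι a.1 b.1 h (ι i a.1 a.2 (g p)) :=
      (htrans i a.1 b.1 a.2 h (g p)).symm
    simp only [hF, e1, e2]
    exact hι1 _ _ _ _ _
  have hcont : ∀ j, Continuous (F j) := fun j =>
    (((LipschitzWith.of_edist_le (hι1 i j.1 j.2)).continuous).comp hf).edist
      (((LipschitzWith.of_edist_le (hι1 i j.1 j.2)).continuous).comp hg)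
  apply le_antisymm
  · refine iSup_le fun p => le_iInf fun j => le_trans ?_ (le_iSup (F j) p)
    exact (hdist i (f p) (g p)).trans_le (iInf_le _ j)
  · refine le_of_forall_gt_imp_ge_of_dense fun c' hc' => ?_
    -- for each p, pick j with F j p < c'
    have hpt : ∀ p : K, ∃ j : {j // i ≤ j}, F j p < c' := by
      intro p
      have h1 : edist (ιc i (f p)) (ιc i (g p)) < c' :=
        lt_of_le_of_lt (le_iSup (fun p => edist (ιc i (f p)) (ιc i (g p))) p) hc'
      rw [hdist] at h1
      exact iInf_lt_iff.mp h1
    choose jp hjp using hpt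
    have hcov : Set.univ ⊆ ⋃ p : K, (F (jp p)) ⁻¹' (Set.Iio c') := by
      intro q _
      exact Set.mem_iUnion.mpr ⟨q, hjp q⟩
    obtain ⟨t, ht⟩ := isCompact_univ.elim_finite_subcover
      (fun p : K => (F (jp p)) ⁻¹' (Set.Iio c'))
      (fun p => (hcont (jp p)).isOpen_preimage _ isOpen_Iio) hcov
    obtain ⟨M, hM⟩ := (t.image jp).exists_le
    have : (⨆ p : K, F M p) ≤ c' := by
      refine iSup_le fun q => ?_
      obtain ⟨p, hpt', hq⟩ := Set.mem_iUnion₂.mp (ht (Set.mem_univ q))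
      exact le_of_lt (lt_of_le_of_lt
        (hmono (jp p) M (hM _ (Finset.mem_image_of_mem jp hpt')) q) hq)
    exact le_trans (iInf_le _ M) this
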